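/- If Y · |S ∩ {1,…,i}| ≤ min(η, R(d(i))) for every i ∈ S, then S admits a feasible single-link schedule; moreover, there is such a schedule in which the chunks of S are downloaded in increasing index order, i.e., z(i,j) > 0 and z(i',j') > 0 with i < i' (both in S) implies j ≤ j'. -/

import Mathlib

lemma minmax_aux1 (a Y u v : ℝ) (hY : 0 ≤ Y) (huv : u ≤ v) :
    max 0 (min (a + Y) v - max a u) = max a (min (a + Y) v) - max a (min (a + Y) u) := by
  simp only [min_def, max_def]; split_ifs <;> linarith

lemma minmax_aux2 (a Y x : ℝ) (hY : 0 ≤ Y) :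
    max a (min (a + Y) x) = a + min Y (max 0 (x - a)) := by
  simp only [min_def, max_def]; split_ifs <;> linarith

lemma minmax_replace (Y A a x : ℝ) (hY : 0 ≤ Y) (h : a + Y ≤ A) :
    min Y (max 0 (min x A - a)) = min Y (max 0 (x - a)) := by
  simp only [min_def, max_def]; split_ifs <;> linarith

lemma minmax_lip (Y s t : ℝ) (h : t ≤ s) : min Y s - min Y t ≤ s - t := by
  simp only [min_def]; split_ifs <;> linarith

lemma max0sub (x A : ℝ) : max 0 (x - A) = x - min x A := by
  simp only [min_def, max_def]; split_ifs <;> linarith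

lemma key_sum (Y : ℝ) (hY : 0 ≤ Y) (S : Finset ℕ) :
    ∀ u v : ℝ, u ≤ v →
    ∑ i ∈ S, (min Y (max 0 (v - Y * ((S.filter (fun k => k < i)).card : ℝ)))
            - min Y (max 0 (u - Y * ((S.filter (fun k => k < i)).card : ℝ)))) ≤ v - u := by
  induction S using Finset.induction_on_max with
  | empty => intro u v huv; simp; linarith
  | insert m S hlt IH =>
    intro u v huv
    have hmS : m ∉ S := fun hm => lt_irrefl m (hlt m hm)
    have hfm : (insert m S).filter (fun k => k < m) = S := by
      rw [Finset.filter_insert]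
      simp only [lt_irrefl, if_false]
      exact Finset.filter_true_of_mem (fun x hx => hlt x hx)
    have hfi : ∀ i ∈ S, (insert m S).filter (fun k => k < i) = S.filter (fun k => k < i) := by
      intro i hi
      rw [Finset.filter_insert, if_neg (not_lt.mpr (le_of_lt (hlt i hi)))]
    set A := Y * (S.card : ℝ) with hA
    set u' := min u A with hu'
    set v' := min v A with hv'
    have hu'v' : u' ≤ v' := min_le_min huv le_rfl
    have hterm : ∀ i ∈ S,
        (min Y (max 0 (v - Y * (((insert m S).filter (fun k => k < i)).card : ℝ)))
          - min Y (max 0 (u - Y * (((insert m S).filter (fun k => k < i)).card : ℝ))))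
        = (min Y (max 0 (v' - Y * ((S.filter (fun k => k < i)).card : ℝ)))
          - min Y (max 0 (u' - Y * ((S.filter (fun k => k < i)).card : ℝ)))) := by
      intro i hi
      rw [hfi i hi]
      have hsub : S.filter (fun k => k < i) ⊂ S :=
        Finset.filter_ssubset.mpr ⟨i, hi, lt_irrefl i⟩
      have hcard : ((S.filter (fun k => k < i)).card : ℝ) + 1 ≤ (S.card : ℝ) := by
        have := Finset.card_lt_card hsub
        exact_mod_cast this
      have hle : Y * ((S.filter (fun k => k < i)).card : ℝ) + Y ≤ A := by
        rw [hA]; nlinarith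
      rw [← minmax_replace Y A _ v hY hle, ← minmax_replace Y A _ u hY hle]
    rw [Finset.sum_insert hmS, Finset.sum_congr rfl hterm, hfm]
    have hIH := IH u' v' hu'v'
    have hlip : min Y (max 0 (v - A)) - min Y (max 0 (u - A))
        ≤ max 0 (v - A) - max 0 (u - A) :=
      minmax_lip Y _ _ (max_le_max le_rfl (by linarith))
    rw [← hA]
    have h1 : max 0 (v - A) = v - min v A := max0sub v A
    have h2 : max 0 (u - A) = u - min u A := max0sub u A
    have hv'' : v' = min v A := hv'
    have hu'' : u' = min u A := hu'
    linarith

/-- Cumulative bandwidth of the link up to time `t`: `R(t) = Σ_{j=1}^t B(j)`. -/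
noncomputable def cumBW (B : ℕ → ℝ) (t : ℕ) : ℝ := ∑ j ∈ Finset.Icc 1 t, B j

/-- A feasible single-link schedule for a set `S` of chunks: download amounts
`z i j ≥ 0` so that each chunk `i ∈ S` gets its full layer of size `Y` by its
deadline `d i`, respecting the per-slot bandwidth `B` and the maximum
contribution `η`. -/
def FeasibleSchedule (Y : ℝ) (d : ℕ → ℕ) (B : ℕ → ℝ) (η : ℝ) (S : Finset ℕ) : Prop :=
  ∃ z : ℕ → ℕ → ℝ,
    (∀ i ∈ S, ∀ j, 0 ≤ z i j) ∧
    (∀ i ∈ S, ∑ j ∈ Finset.Icc 1 (d i), z i j = Y) ∧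
    (∀ i ∈ S, ∀ j, (j < 1 ∨ d i < j) → z i j = 0) ∧
    (∀ j, 1 ≤ j → ∑ i ∈ S, z i j ≤ B j) ∧
    (∑ i ∈ S, ∑ j ∈ Finset.Icc 1 (d i), z i j ≤ η)

/-- If `Y·|S ∩ {1,…,i}| ≤ min(η, R(d(i)))` for every `i ∈ S`, then `S` admits a
feasible single-link schedule, and moreover one in which the chunks of `S` are
downloaded in increasing index order. -/
theorem feasible_schedule_in_order
    (C : ℕ) (Y : ℝ) (hY : 0 < Y)
    (d : ℕ → ℕ) (hd : Monotone d)
    (B : ℕ → ℝ) (hB : ∀ j, 1 ≤ j → 0 ≤ B j)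
    (η : ℝ) (hη : 0 ≤ η)
    (S : Finset ℕ) (hS : S ⊆ Finset.Icc 1 C)
    (h : ∀ i ∈ S,
      Y * ((S.filter (fun k => k ≤ i)).card : ℝ) ≤ min η (cumBW B (d i))) :
    ∃ z : ℕ → ℕ → ℝ,
      (∀ i ∈ S, ∀ j, 0 ≤ z i j) ∧
      (∀ i ∈ S, ∑ j ∈ Finset.Icc 1 (d i), z i j = Y) ∧
      (∀ i ∈ S, ∀ j, (j < 1 ∨ d i < j) → z i j = 0) ∧
      (∀ j, 1 ≤ j → ∑ i ∈ S, z i j ≤ B j) ∧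
      (∑ i ∈ S, ∑ j ∈ Finset.Icc 1 (d i), z i j ≤ η) ∧
      (∀ i ∈ S, ∀ i' ∈ S, ∀ j j', i < i' → 0 < z i j → 0 < z i' j' → j ≤ j') := by
  classical
  set R := cumBW B with hR
  set a : ℕ → ℝ := fun i => Y * ((S.filter (fun k => k < i)).card : ℝ) with ha
  set z : ℕ → ℕ → ℝ := fun i j =>
    if j = 0 then 0 else max 0 (min (a i + Y) (R j) - max (a i) (R (j - 1))) with hz
  -- basic facts about R
  have hRmono : ∀ s t : ℕ, s ≤ t → R s ≤ R t := by
    intro s t hst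
    apply Finset.sum_le_sum_of_subset_of_nonneg (Finset.Icc_subset_Icc_right hst)
    intro j hj _
    exact hB j (Finset.mem_Icc.mp hj).1
  have hR0 : R 0 = 0 := by simp [hR, cumBW]
  have hRB : ∀ j : ℕ, 1 ≤ j → R j = R (j - 1) + B j := by
    intro j hj
    have hj1 : j = (j - 1) + 1 := by omega
    rw [hj1]
    have := Finset.sum_Icc_succ_top (a := 1) (b := j - 1) (by omega) B
    simp only [hR, cumBW]
    rw [this]
    congr 1
  -- the key cardinality identity
  have hcard : ∀ i ∈ S, ((S.filter (fun k => k ≤ i)).card : ℝ)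
      = ((S.filter (fun k => k < i)).card : ℝ) + 1 := by
    intro i hi
    have hset : S.filter (fun k => k ≤ i) = insert i (S.filter (fun k => k < i)) := by
      ext k
      simp only [Finset.mem_filter, Finset.mem_insert]
      constructor
      · rintro ⟨hk, hki⟩
        rcases lt_or_eq_of_le hki with h' | h'
        · exact Or.inr ⟨hk, h'⟩
        · exact Or.inl h'
      · rintro (rfl | ⟨hk, hki⟩)
        · exact ⟨hi, le_rfl⟩
        · exact ⟨hk, le_of_lt hki⟩
    rw [hset, Finset.card_insert_of_notMem (by simp)]
    push_cast; ring
  have hbi : ∀ i ∈ S, a i + Y ≤ min η (R (d i)) := by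
    intro i hi
    have := h i hi
    rw [hcard i hi] at this
    rw [ha]; simp only []
    nlinarith [this]
  have haY : ∀ i, 0 ≤ a i := by
    intro i
    exact mul_nonneg (le_of_lt hY) (Nat.cast_nonneg _)
  -- ordering of intervals
  have hord : ∀ i ∈ S, ∀ i' ∈ S, i < i' → a i + Y ≤ a i' := by
    intro i hi i' hi' hii'
    have hsub : S.filter (fun k => k ≤ i) ⊆ S.filter (fun k => k < i') := by
      intro k hk
      simp only [Finset.mem_filter] at hk ⊢
      exact ⟨hk.1, lt_of_le_of_lt hk.2 hii'⟩
    have hc : ((S.filter (fun k => k ≤ i)).card : ℝ)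
        ≤ ((S.filter (fun k => k < i')).card : ℝ) := by
      exact_mod_cast Finset.card_le_card hsub
    rw [hcard i hi] at hc
    rw [ha]; simp only []
    nlinarith [hc]
  -- z as difference of clamps for j ≥ 1
  have hzdiff : ∀ i, ∀ j : ℕ, 1 ≤ j →
      z i j = max (a i) (min (a i + Y) (R j)) - max (a i) (min (a i + Y) (R (j - 1))) := by
    intro i j hj
    rw [hz]
    simp only [Nat.ne_zero_of_lt hj, if_neg (by omega : ¬ j = 0)]
    exact minmax_aux1 (a i) Y (R (j-1)) (R j) (le_of_lt hY) (hRmono _ _ (by omega))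
  -- property 1: nonnegativity
  have prop1 : ∀ i ∈ S, ∀ j, 0 ≤ z i j := by
    intro i _ j
    rw [hz]
    dsimp only
    split
    · exact le_rfl
    · exact le_max_left _ _
  -- property 2: completion
  have prop2 : ∀ i ∈ S, ∑ j ∈ Finset.Icc 1 (d i), z i j = Y := by
    intro i hi
    have hrw : ∀ j ∈ Finset.Icc 1 (d i),
        z i j = (fun t => max (a i) (min (a i + Y) (R t))) j
              - (fun t => max (a i) (min (a i + Y) (R t))) (j - 1) := by
      intro j hj
      exact hzdiff i j (Finset.mem_Icc.mp hj).1
    rw [Finset.sum_congr rfl hrw, ← Finset.Ico_add_one_right_eq_Icc, Finset.sum_Ico_eq_sum_range,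
      Nat.add_sub_cancel]
    have hstep : ∀ k ∈ Finset.range (d i),
        max (a i) (min (a i + Y) (R (1 + k))) - max (a i) (min (a i + Y) (R (1 + k - 1)))
        = (fun t => max (a i) (min (a i + Y) (R t))) (k + 1)
          - (fun t => max (a i) (min (a i + Y) (R t))) k := by
      intro k _
      have e1 : 1 + k = k + 1 := by omega
      have e2 : 1 + k - 1 = k := by omega
      rw [e2, e1]
    rw [Finset.sum_congr rfl hstep,
      Finset.sum_range_sub (fun t => max (a i) (min (a i + Y) (R t)))]
    show max (a i) (min (a i + Y) (R (d i))) - max (a i) (min (a i + Y) (R 0)) = Y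
    have h1 : max (a i) (min (a i + Y) (R (d i))) = a i + Y := by
      have := hbi i hi
      have h2 : a i + Y ≤ R (d i) := le_trans this (min_le_right _ _)
      rw [min_eq_left h2, max_eq_right (by linarith [hY])]
    have h0 : max (a i) (min (a i + Y) (R 0)) = a i := by
      rw [hR0, min_eq_right (by linarith [haY i, hY.le]), max_eq_left (haY i)]
    rw [h1, h0]; ring
  -- property 3: vanishing outside window
  have prop3 : ∀ i ∈ S, ∀ j, (j < 1 ∨ d i < j) → z i j = 0 := by
    intro i hi j hj
    rcases hj with hj | hj
    · rw [hz]; simp only [if_pos (by omega : j = 0)]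
    · have hj1 : 1 ≤ j := by omega
      rw [hz]
      simp only [if_neg (by omega : ¬ j = 0)]
      have hle : a i + Y ≤ R (j - 1) := by
        have := hbi i hi
        have h2 : a i + Y ≤ R (d i) := le_trans this (min_le_right _ _)
        exact le_trans h2 (hRmono _ _ (by omega))
      have : min (a i + Y) (R j) - max (a i) (R (j - 1)) ≤ 0 := by
        have h3 : min (a i + Y) (R j) ≤ a i + Y := min_le_left _ _
        have h4 : R (j - 1) ≤ max (a i) (R (j - 1)) := le_max_right _ _
        linarith
      exact max_eq_left this
  -- property 4: per-slot bandwidth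
  have prop4 : ∀ j, 1 ≤ j → ∑ i ∈ S, z i j ≤ B j := by
    intro j hj
    have hrw : ∀ i ∈ S, z i j
        = (min Y (max 0 (R j - Y * ((S.filter (fun k => k < i)).card : ℝ)))
          - min Y (max 0 (R (j-1) - Y * ((S.filter (fun k => k < i)).card : ℝ)))) := by
      intro i _
      rw [hzdiff i j hj, minmax_aux2 _ _ _ (le_of_lt hY), minmax_aux2 _ _ _ (le_of_lt hY)]
      rw [ha]; ring
    rw [Finset.sum_congr rfl hrw]
    have := key_sum Y (le_of_lt hY) S (R (j-1)) (R j) (hRmono _ _ (by omega))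
    have hBj := hRB j hj
    linarith
  -- property 5: total ≤ η
  have prop5 : ∑ i ∈ S, ∑ j ∈ Finset.Icc 1 (d i), z i j ≤ η := by
    rw [Finset.sum_congr rfl (fun i hi => prop2 i hi), Finset.sum_const, nsmul_eq_mul]
    rcases Finset.eq_empty_or_nonempty S with rfl | hne
    · simpa using hη
    · have hm : S.max' hne ∈ S := S.max'_mem hne
      have hfull : S.filter (fun k => k ≤ S.max' hne) = S :=
        Finset.filter_true_of_mem (fun x hx => S.le_max' x hx)
      have := h (S.max' hne) hm
      rw [hfull] at this
      have := le_trans this (min_le_left _ _)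
      linarith
  refine ⟨z, prop1, prop2, prop3, prop4, prop5, ?_⟩
  -- ordering property
  intro i hi i' hi' j j' hii' hzij hzij'
  by_contra hcon
  push_neg at hcon
  have hj0 : j ≠ 0 := by
    intro hj0; rw [hz] at hzij; simp [hj0] at hzij
  have hj'0 : j' ≠ 0 := by
    intro hj0; rw [hz] at hzij'; simp [hj0] at hzij'
  rw [hz] at hzij hzij'
  simp only [if_neg hj0] at hzij
  simp only [if_neg hj'0] at hzij'
  have h1 : min (a i + Y) (R j) - max (a i) (R (j - 1)) > 0 := by
    by_contra h'
    push_neg at h'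
    rw [max_eq_left h'] at hzij
    exact lt_irrefl 0 hzij
  have h2 : min (a i' + Y) (R j') - max (a i') (R (j' - 1)) > 0 := by
    by_contra h'
    push_neg at h'
    rw [max_eq_left h'] at hzij'
    exact lt_irrefl 0 hzij'
  -- From h1: R (j-1) < a i + Y.  From h2: a i' < R j'.
  have key1 : R (j - 1) < a i + Y := by
    have := le_max_right (a i) (R (j - 1))
    have := min_le_left (a i + Y) (R j)
    linarith
  have key2 : a i' < R j' := by
    have := le_max_left (a i') (R (j' - 1))
    have := min_le_right (a i' + Y) (R j')
    linarith
  have hmon : R j' ≤ R (j - 1) := hRmono _ _ (by omega)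
  have := hord i hi i' hi' hii'
  linarith
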